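/- Under the hypotheses of the dual Brunn-Minkowski inequality for copolars (Q₀, Q₁ ⊆ (-∞,0)^n nonempty closed convex complete sets with finite copolar covolumes), if Covol(Q_t°) = Covol(Q₀°)^{1-t} Covol(Q₁°)^t for some t ∈ (0,1), then Q₀ = Q₁. -/

import Mathlib

open MeasureTheory Set Pointwise

noncomputable section

/-- The open negative orthant `(-∞,0)^n`. -/
def negOrth (n : ℕ) : Set (Fin n → ℝ) := {y | ∀ i, y i < 0}

/-- The nonnegative orthant `[0,∞)^n`. -/
def nonnegOrth (n : ℕ) : Set (Fin n → ℝ) := {x | ∀ i, 0 ≤ x i}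

/-- The nonpositive orthant `(-∞,0]^n`. -/
def nonposOrth (n : ℕ) : Set (Fin n → ℝ) := {v | ∀ i, v i ≤ 0}

/-- The Euclidean pairing `⟨x,y⟩ = ∑ i, x i * y i`. -/
def pairing {n : ℕ} (x y : Fin n → ℝ) : ℝ := ∑ i, x i * y i

/-- Support function `h_Q(x) = sup_{y ∈ Q} ⟨x,y⟩`. -/
def supp {n : ℕ} (Q : Set (Fin n → ℝ)) (x : Fin n → ℝ) : ℝ :=
  sSup ((fun y => pairing x y) '' Q)

/-- Copolar `Q° = {x ∈ [0,∞)^n : ⟨x,y⟩ ≤ -1 ∀ y ∈ Q}`. -/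
def copolar {n : ℕ} (Q : Set (Fin n → ℝ)) : Set (Fin n → ℝ) :=
  {x ∈ nonnegOrth n | ∀ y ∈ Q, pairing x y ≤ -1}

/-- Minkowski combination `(1-t)Q₀ + tQ₁`. -/
def minkComb {n : ℕ} (t : ℝ) (Q₀ Q₁ : Set (Fin n → ℝ)) : Set (Fin n → ℝ) :=
  {z | ∃ a ∈ Q₀, ∃ b ∈ Q₁, z = (1 - t) • a + t • b}

open scoped ENNReal

namespace CopolarEq

open Real

variable {n : ℕ}

/-- The open positive orthant. -/
def posOrth (n : ℕ) : Set (Fin n → ℝ) := {x | ∀ i, 0 < x i}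

lemma isOpen_posOrth : IsOpen (posOrth n) := by
  have : posOrth n = ⋂ i, (fun x : Fin n → ℝ => x i) ⁻¹' Ioi 0 := by
    ext x; simp [posOrth]
  rw [this]
  exact isOpen_iInter_of_finite fun i => (continuous_apply i).isOpen_preimage _ isOpen_Ioi

lemma posOrth_subset : posOrth n ⊆ nonnegOrth n := fun x hx i => (hx i).le

lemma one_mem_posOrth : (fun _ => (1:ℝ)) ∈ posOrth n := fun _ => one_pos

lemma convex_posOrth : Convex ℝ (posOrth n) := by
  intro x hx z hz s u hs hu hsu
  intro i
  simp only [Pi.add_apply, Pi.smul_apply, smul_eq_mul]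
  rcases eq_or_lt_of_le hs with h | h
  · have : u = 1 := by linarith
    simp [← h, this]; exact hz i
  · have h1 : 0 < s * x i := mul_pos h (hx i)
    have h2 : 0 ≤ u * z i := mul_nonneg hu (hz i).le
    linarith

lemma pairing_nonpos {x y : Fin n → ℝ} (hx : x ∈ nonnegOrth n) (hy : y ∈ negOrth n) :
    pairing x y ≤ 0 :=
  Finset.sum_nonpos fun i _ => mul_nonpos_of_nonneg_of_nonpos (hx i) (hy i).le

lemma pairing_add_left (x z y : Fin n → ℝ) : pairing (x + z) y = pairing x y + pairing z y := by
  simp only [pairing, Pi.add_apply, add_mul, Finset.sum_add_distrib]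

lemma pairing_smul_left (c : ℝ) (x y : Fin n → ℝ) : pairing (c • x) y = c * pairing x y := by
  simp only [pairing, Pi.smul_apply, smul_eq_mul, Finset.mul_sum, mul_assoc]

lemma pairing_comb (s u : ℝ) (x a b : Fin n → ℝ) :
    pairing x (s • a + u • b) = s * pairing x a + u * pairing x b := by
  simp only [pairing, Pi.add_apply, Pi.smul_apply, smul_eq_mul, mul_add,
    Finset.sum_add_distrib, Finset.mul_sum]
  congr 1 <;> exact Finset.sum_congr rfl fun i _ => by ring

lemma bddAbove_img {Q : Set (Fin n → ℝ)} (hQ : Q ⊆ negOrth n) {x : Fin n → ℝ}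
    (hx : x ∈ nonnegOrth n) : BddAbove ((fun y => pairing x y) '' Q) := by
  refine ⟨0, ?_⟩
  rintro _ ⟨y, hy, rfl⟩
  exact pairing_nonpos hx (hQ hy)

lemma supp_le {Q : Set (Fin n → ℝ)} (hne : Q.Nonempty) {x : Fin n → ℝ} {c : ℝ}
    (h : ∀ y ∈ Q, pairing x y ≤ c) : supp Q x ≤ c :=
  csSup_le (hne.image _) (by rintro _ ⟨y, hy, rfl⟩; exact h y hy)

lemma le_supp {Q : Set (Fin n → ℝ)} (hQ : Q ⊆ negOrth n) {x y : Fin n → ℝ}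
    (hx : x ∈ nonnegOrth n) (hy : y ∈ Q) : pairing x y ≤ supp Q x :=
  le_csSup (bddAbove_img hQ hx) ⟨y, hy, rfl⟩

lemma supp_nonpos {Q : Set (Fin n → ℝ)} (hQ : Q ⊆ negOrth n) (hne : Q.Nonempty)
    {x : Fin n → ℝ} (hx : x ∈ nonnegOrth n) : supp Q x ≤ 0 :=
  supp_le hne fun y hy => pairing_nonpos hx (hQ hy)

lemma supp_smul {Q : Set (Fin n → ℝ)} (hQ : Q ⊆ negOrth n) (hne : Q.Nonempty)
    {x : Fin n → ℝ} (hx : x ∈ nonnegOrth n) {c : ℝ} (hc : 0 < c) :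
    supp Q (c • x) = c * supp Q x := by
  have hcx : c • x ∈ nonnegOrth n := fun i => by
    simpa using mul_nonneg hc.le (hx i)
  apply le_antisymm
  · refine supp_le hne fun y hy => ?_
    rw [pairing_smul_left]
    exact mul_le_mul_of_nonneg_left (le_supp hQ hx hy) hc.le
  · have h2 : supp Q x ≤ c⁻¹ * supp Q (c • x) := by
      refine supp_le hne fun y hy => ?_
      have : pairing (c • x) y ≤ supp Q (c • x) := le_supp hQ hcx hy
      rw [pairing_smul_left] at this
      have := mul_le_mul_of_nonneg_left this (inv_nonneg.mpr hc.le)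
      rwa [← mul_assoc, inv_mul_cancel₀ hc.ne', one_mul] at this
    have := mul_le_mul_of_nonneg_left h2 hc.le
    rwa [← mul_assoc, mul_inv_cancel₀ hc.ne', one_mul] at this

lemma supp_subadd {Q : Set (Fin n → ℝ)} (hQ : Q ⊆ negOrth n) (hne : Q.Nonempty)
    {x z : Fin n → ℝ} (hx : x ∈ nonnegOrth n) (hz : z ∈ nonnegOrth n) :
    supp Q (x + z) ≤ supp Q x + supp Q z := by
  refine supp_le hne fun y hy => ?_
  rw [pairing_add_left]
  exact add_le_add (le_supp hQ hx hy) (le_supp hQ hz hy)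

lemma convexOn_supp {Q : Set (Fin n → ℝ)} (hQ : Q ⊆ negOrth n) (hne : Q.Nonempty) :
    ConvexOn ℝ (posOrth n) (supp Q) := by
  refine ⟨convex_posOrth, fun x hx z hz s u hs hu hsu => ?_⟩
  refine supp_le hne fun y hy => ?_
  have : pairing (s • x + u • z) y = s * pairing x y + u * pairing z y := by
    rw [pairing_add_left, pairing_smul_left, pairing_smul_left]
  rw [this]
  simp only [smul_eq_mul]
  exact add_le_add (mul_le_mul_of_nonneg_left (le_supp hQ (posOrth_subset hx) hy) hs)
    (mul_le_mul_of_nonneg_left (le_supp hQ (posOrth_subset hz) hy) hu)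

lemma continuousOn_supp {Q : Set (Fin n → ℝ)} (hQ : Q ⊆ negOrth n) (hne : Q.Nonempty) :
    ContinuousOn (supp Q) (posOrth n) :=
  (convexOn_supp hQ hne).continuousOn isOpen_posOrth

lemma minkComb_subset {Q₀ Q₁ : Set (Fin n → ℝ)} (h₀ : Q₀ ⊆ negOrth n) (h₁ : Q₁ ⊆ negOrth n)
    {t : ℝ} (ht : t ∈ Set.Ioo (0:ℝ) 1) : minkComb t Q₀ Q₁ ⊆ negOrth n := by
  rintro _ ⟨a, ha, b, hb, rfl⟩ i
  simp only [Pi.add_apply, Pi.smul_apply, smul_eq_mul]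
  have h1 : (1 - t) * a i < 0 := mul_neg_of_pos_of_neg (by linarith [ht.2]) (h₀ ha i)
  have h2 : t * b i < 0 := mul_neg_of_pos_of_neg ht.1 (h₁ hb i)
  linarith

lemma minkComb_nonempty {Q₀ Q₁ : Set (Fin n → ℝ)} (h₀ : Q₀.Nonempty) (h₁ : Q₁.Nonempty)
    (t : ℝ) : (minkComb t Q₀ Q₁).Nonempty := by
  obtain ⟨a, ha⟩ := h₀; obtain ⟨b, hb⟩ := h₁
  exact ⟨_, a, ha, b, hb, rfl⟩

lemma supp_minkComb {Q₀ Q₁ : Set (Fin n → ℝ)} (h₀ : Q₀ ⊆ negOrth n) (h₁ : Q₁ ⊆ negOrth n)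
    (h₀ne : Q₀.Nonempty) (h₁ne : Q₁.Nonempty) {t : ℝ} (ht : t ∈ Set.Ioo (0:ℝ) 1)
    {x : Fin n → ℝ} (hx : x ∈ nonnegOrth n) :
    supp (minkComb t Q₀ Q₁) x = (1 - t) * supp Q₀ x + t * supp Q₁ x := by
  have h1t : (0:ℝ) < 1 - t := by linarith [ht.2]
  have hMsub := minkComb_subset h₀ h₁ ht
  have hMne := minkComb_nonempty h₀ne h₁ne t
  apply le_antisymm
  · refine supp_le hMne ?_
    rintro _ ⟨a, ha, b, hb, rfl⟩
    rw [pairing_comb]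
    exact add_le_add (mul_le_mul_of_nonneg_left (le_supp h₀ hx ha) h1t.le)
      (mul_le_mul_of_nonneg_left (le_supp h₁ hx hb) ht.1.le)
  · set S := supp (minkComb t Q₀ Q₁) x with hS
    have key : ∀ a ∈ Q₀, ∀ b ∈ Q₁, (1 - t) * pairing x a + t * pairing x b ≤ S := by
      intro a ha b hb
      have := le_supp hMsub hx (⟨a, ha, b, hb, rfl⟩ : _ ∈ minkComb t Q₀ Q₁)
      rwa [pairing_comb] at this
    have hb' : ∀ b ∈ Q₁, pairing x b ≤ (S - (1 - t) * supp Q₀ x) / t := by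
      intro b hb
      rw [le_div_iff₀ ht.1]
      have h0le : supp Q₀ x ≤ (S - t * pairing x b) / (1 - t) := by
        refine supp_le h₀ne fun a ha => ?_
        rw [le_div_iff₀ h1t]
        have := key a ha b hb
        linarith
      rw [le_div_iff₀ h1t] at h0le
      linarith
    have := supp_le h₁ne hb'
    rw [le_div_iff₀ ht.1] at this
    linarith

lemma diff_copolar {Q : Set (Fin n → ℝ)} (hQ : Q ⊆ negOrth n) (hne : Q.Nonempty) :
    nonnegOrth n \ copolar Q = {x | x ∈ nonnegOrth n ∧ -1 < supp Q x} := by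
  ext x
  simp only [mem_diff, copolar, mem_setOf_eq, mem_sep_iff]
  constructor
  · rintro ⟨hx, hnc⟩
    refine ⟨hx, ?_⟩
    by_contra h
    push_neg at h
    exact hnc ⟨hx, fun y hy => (le_supp hQ hx hy).trans h⟩
  · rintro ⟨hx, hlt⟩
    refine ⟨hx, fun hc => ?_⟩
    exact absurd (supp_le hne hc.2) (not_le.mpr hlt)


section Measure

lemma measurableSet_posOrth : MeasurableSet (posOrth n) := isOpen_posOrth.measurableSet

lemma volume_hyperplane (i : Fin n) : volume {x : Fin n → ℝ | x i = 0} = 0 := by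
  have : {x : Fin n → ℝ | x i = 0}
      = (LinearMap.ker (LinearMap.proj i : (Fin n → ℝ) →ₗ[ℝ] ℝ) : Set (Fin n → ℝ)) := by
    ext x; simp [LinearMap.mem_ker]
  rw [this]
  apply MeasureTheory.Measure.addHaar_submodule
  intro h
  have h1 : (Pi.single i 1 : Fin n → ℝ)
      ∈ LinearMap.ker (LinearMap.proj i : (Fin n → ℝ) →ₗ[ℝ] ℝ) := by
    rw [h]; trivial
  simp [LinearMap.mem_ker] at h1

lemma volume_nonneg_diff_pos : volume (nonnegOrth n \ posOrth n) = 0 := by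
  have hsub : nonnegOrth n \ posOrth n ⊆ ⋃ i, {x : Fin n → ℝ | x i = 0} := by
    rintro x ⟨hx, hnx⟩
    simp only [posOrth, mem_setOf_eq, not_forall] at hnx
    obtain ⟨i, hi⟩ := hnx
    exact mem_iUnion.mpr ⟨i, le_antisymm (not_lt.mp hi) (hx i)⟩
  exact measure_mono_null hsub (measure_iUnion_null fun i => volume_hyperplane i)

/-- Truncated super-level sets of the support function. -/
def Sr (Q : Set (Fin n → ℝ)) (r : ℝ) : Set (Fin n → ℝ) := posOrth n ∩ {x | -r < supp Q x}

lemma isOpen_Sr {Q : Set (Fin n → ℝ)} (hQ : Q ⊆ negOrth n) (hne : Q.Nonempty) (r : ℝ) :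
    IsOpen (Sr Q r) := by
  have : Sr Q r = posOrth n ∩ supp Q ⁻¹' (Ioi (-r)) := rfl
  rw [this]
  exact (continuousOn_supp hQ hne).isOpen_inter_preimage isOpen_posOrth isOpen_Ioi

lemma vol_diff_eq {Q : Set (Fin n → ℝ)} (hQ : Q ⊆ negOrth n) (hne : Q.Nonempty) :
    volume (nonnegOrth n \ copolar Q) = volume (Sr Q 1) := by
  set A := nonnegOrth n \ copolar Q with hA
  have hA' : A = {x | x ∈ nonnegOrth n ∧ -1 < supp Q x} := diff_copolar hQ hne
  have h1 : A ∩ posOrth n = Sr Q 1 := by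
    ext x
    simp only [hA', Sr, mem_inter_iff, mem_setOf_eq]
    exact ⟨fun ⟨⟨_, h2⟩, h3⟩ => ⟨h3, h2⟩, fun ⟨h3, h2⟩ => ⟨⟨posOrth_subset h3, h2⟩, h3⟩⟩
  apply le_antisymm
  · calc volume A ≤ volume ((A ∩ posOrth n) ∪ (A \ posOrth n)) := by
          apply measure_mono; intro x hx
          by_cases h : x ∈ posOrth n
          · exact Or.inl ⟨hx, h⟩
          · exact Or.inr ⟨hx, h⟩
      _ ≤ volume (A ∩ posOrth n) + volume (A \ posOrth n) := measure_union_le _ _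
      _ ≤ volume (Sr Q 1) + 0 := by
          rw [h1]
          refine add_le_add le_rfl (le_of_eq (measure_mono_null ?_ volume_nonneg_diff_pos))
          intro x hx
          exact ⟨(hA' ▸ hx.1).1, hx.2⟩
      _ = volume (Sr Q 1) := add_zero _
  · rw [← h1]; exact measure_mono inter_subset_left

lemma smul_Sr {Q : Set (Fin n → ℝ)} (hQ : Q ⊆ negOrth n) (hne : Q.Nonempty) {r : ℝ}
    (hr : 0 < r) : Sr Q r = r • Sr Q 1 := by
  ext x
  rw [mem_smul_set_iff_inv_smul_mem₀ hr.ne']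
  have hps : ∀ z : Fin n → ℝ, z ∈ posOrth n → r⁻¹ • z ∈ posOrth n ∧ r • z ∈ posOrth n := by
    intro z hz
    constructor <;> intro i <;> simp only [Pi.smul_apply, smul_eq_mul] <;>
      [exact mul_pos (inv_pos.mpr hr) (hz i); exact mul_pos hr (hz i)]
  constructor
  · rintro ⟨hxp, hxs⟩
    have hmem : r⁻¹ • x ∈ posOrth n := (hps x hxp).1
    refine ⟨hmem, ?_⟩
    have : supp Q (r⁻¹ • x) = r⁻¹ * supp Q x := supp_smul hQ hne (posOrth_subset hxp) (inv_pos.mpr hr)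
    simp only [mem_setOf_eq, this]
    rw [inv_mul_eq_div, neg_lt, ← neg_div, div_lt_iff₀ hr, one_mul]
    simpa only [mem_setOf_eq, neg_lt] using hxs
  · rintro ⟨hxp, hxs⟩
    have hxpos : x ∈ posOrth n := by
      have := (hps (r⁻¹ • x) hxp).2
      simpa only [smul_inv_smul₀ hr.ne'] using this
    refine ⟨hxpos, ?_⟩
    have hq : supp Q (r⁻¹ • x) = r⁻¹ * supp Q x := supp_smul hQ hne (posOrth_subset hxpos) (inv_pos.mpr hr)
    simp only [mem_setOf_eq, hq] at hxs
    rw [inv_mul_eq_div, neg_lt, ← neg_div, div_lt_iff₀ hr, one_mul] at hxs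
    simpa only [mem_setOf_eq, neg_lt] using hxs

lemma vol_Sr {Q : Set (Fin n → ℝ)} (hQ : Q ⊆ negOrth n) (hne : Q.Nonempty) {r : ℝ}
    (hr : 0 < r) : volume (Sr Q r) = ENNReal.ofReal (r ^ n) * volume (Sr Q 1) := by
  rw [smul_Sr hQ hne hr, Measure.addHaar_smul_of_nonneg volume hr.le,
    Module.finrank_fintype_fun_eq_card, Fintype.card_fin]


lemma image_exp_neg_Ioi : (fun s : ℝ => Real.exp (-s)) '' Ioi 0 = Ioo 0 1 := by
  ext u
  constructor
  · rintro ⟨s, hs, rfl⟩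
    exact ⟨Real.exp_pos _, by rw [Real.exp_lt_one_iff]; simpa using hs⟩
  · rintro ⟨hu0, hu1⟩
    refine ⟨-Real.log u, ?_, show Real.exp (-(-Real.log u)) = u by rw [neg_neg, Real.exp_log hu0]⟩
    simpa using Real.log_neg hu0 hu1

lemma neglog_integral_eq_factorial (n : ℕ) :
    ∫⁻ u in Ioo (0:ℝ) 1, ENNReal.ofReal ((-Real.log u) ^ n) = (n.factorial : ℝ≥0∞) := by
  have hderiv : ∀ s ∈ Ioi (0:ℝ),
      HasDerivWithinAt (fun s : ℝ => Real.exp (-s)) (-Real.exp (-s)) (Ioi 0) s := by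
    intro s _
    have h := (hasDerivAt_neg s).exp
    simpa [mul_comm] using h.hasDerivWithinAt
  have hinj : InjOn (fun s : ℝ => Real.exp (-s)) (Ioi 0) := fun a _ b _ h => by
    have := Real.exp_injective h
    linarith [neg_injective this]
  -- change of variables for the Bochner integral
  have hcv := integral_image_eq_integral_abs_deriv_smul measurableSet_Ioi hderiv hinj
      (fun u : ℝ => (-Real.log u) ^ n)
  rw [image_exp_neg_Ioi] at hcv
  have hGint : IntegrableOn (fun x : ℝ => Real.exp (-x) * x ^ (((n:ℝ)+1) - 1)) (Ioi 0) :=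
    Real.GammaIntegral_convergent (by positivity)
  have hint_rhs : IntegrableOn (fun s : ℝ => |(-Real.exp (-s))| • (-Real.log (Real.exp (-s))) ^ n)
      (Ioi 0) := by
    apply hGint.congr_fun _ measurableSet_Ioi
    intro s hs
    simp only [abs_neg, abs_of_pos (Real.exp_pos _), Real.log_exp, neg_neg, smul_eq_mul]
    rw [show ((n:ℝ)+1) - 1 = (n:ℝ) by ring, Real.rpow_natCast]
  have hint_lhs : IntegrableOn (fun u : ℝ => (-Real.log u) ^ n) (Ioo 0 1) := by
    have := (integrableOn_image_iff_integrableOn_abs_deriv_smul measurableSet_Ioi hderiv hinj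
      (fun u : ℝ => (-Real.log u) ^ n)).mpr hint_rhs
    rwa [image_exp_neg_Ioi] at this
  have hval : ∫ u in Ioo (0:ℝ) 1, (-Real.log u) ^ n = (n.factorial : ℝ) := by
    rw [hcv]
    have : ∫ s in Ioi (0:ℝ), |(-Real.exp (-s))| • (-Real.log (Real.exp (-s))) ^ n
        = ∫ s in Ioi (0:ℝ), Real.exp (-s) * s ^ (((n:ℝ)+1) - 1) := by
      apply setIntegral_congr_fun measurableSet_Ioi
      intro s hs
      simp only [abs_neg, abs_of_pos (Real.exp_pos _), Real.log_exp, neg_neg, smul_eq_mul]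
      rw [show ((n:ℝ)+1) - 1 = (n:ℝ) by ring, Real.rpow_natCast]
    rw [this, ← Real.Gamma_eq_integral (show (0:ℝ) < (n:ℝ)+1 by positivity)]
    rw [show ((n:ℝ)+1) = ((n:ℝ) + 1) by ring, Real.Gamma_nat_eq_factorial]
  rw [← ofReal_integral_eq_lintegral_ofReal hint_lhs, hval, ENNReal.ofReal_natCast]
  · rw [Filter.EventuallyLE, ae_restrict_iff' measurableSet_Ioo]
    filter_upwards with u hu
    have : 0 ≤ -Real.log u := by simpa using (Real.log_neg hu.1 hu.2).le
    positivity


lemma key_integral {Q : Set (Fin n → ℝ)} (hQ : Q ⊆ negOrth n) (hne : Q.Nonempty) :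
    ∫⁻ x in posOrth n, ENNReal.ofReal (Real.exp (supp Q x))
      = (n.factorial : ℝ≥0∞) * volume (nonnegOrth n \ copolar Q) := by
  have hcont : ContinuousOn (fun x => Real.exp (supp Q x)) (posOrth n) :=
    Real.continuous_exp.comp_continuousOn (continuousOn_supp hQ hne)
  have hm : AEMeasurable (fun x => Real.exp (supp Q x)) (volume.restrict (posOrth n)) :=
    hcont.aemeasurable measurableSet_posOrth
  rw [lintegral_eq_lintegral_meas_lt _ (Filter.Eventually.of_forall fun x => (Real.exp_pos _).le) hm]
  have hsplit : Ioi (0:ℝ) = Ioo 0 1 ∪ Ici 1 := by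
    ext u
    simp only [mem_Ioi, mem_union, mem_Ioo, mem_Ici]
    constructor
    · intro h; rcases lt_or_ge u 1 with h1 | h1
      · exact Or.inl ⟨h, h1⟩
      · exact Or.inr h1
    · rintro (⟨h, _⟩ | h) <;> linarith
  rw [hsplit, lintegral_union measurableSet_Ici (by
    rw [Set.disjoint_iff]; rintro u ⟨⟨_, h1⟩, h2⟩; exact absurd h2 (not_le.mpr h1))]
  have hzero : ∫⁻ u in Ici (1:ℝ),
      (volume.restrict (posOrth n)) {a | u < Real.exp (supp Q a)} = 0 := by
    rw [setLIntegral_congr_fun measurableSet_Ici (g := fun _ => 0), lintegral_zero]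
    intro u hu
    beta_reduce
    rw [Measure.restrict_apply' measurableSet_posOrth]
    convert measure_empty (μ := volume)
    ext a
    simp only [mem_inter_iff, mem_setOf_eq, mem_empty_iff_false, iff_false, not_and]
    intro hlt ha
    have h1 : Real.exp (supp Q a) ≤ 1 := by
      rw [show (1:ℝ) = Real.exp 0 by simp]
      exact Real.exp_le_exp.mpr (supp_nonpos hQ hne (posOrth_subset ha))
    have hu' : (1:ℝ) ≤ u := hu
    linarith
  rw [hzero, add_zero]
  have hmain : ∫⁻ u in Ioo (0:ℝ) 1,
      (volume.restrict (posOrth n)) {a | u < Real.exp (supp Q a)}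
      = ∫⁻ u in Ioo (0:ℝ) 1, ENNReal.ofReal ((-Real.log u) ^ n) * volume (Sr Q 1) := by
    apply setLIntegral_congr_fun measurableSet_Ioo
    intro u hu
    beta_reduce
    rw [Measure.restrict_apply' measurableSet_posOrth]
    have hset : {a | u < Real.exp (supp Q a)} ∩ posOrth n = Sr Q (-Real.log u) := by
      ext a
      simp only [mem_inter_iff, mem_setOf_eq, Sr, neg_neg]
      constructor
      · rintro ⟨h1, h2⟩
        exact ⟨h2, (Real.log_lt_iff_lt_exp hu.1).mpr h1⟩
      · rintro ⟨h2, h1⟩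
        exact ⟨(Real.log_lt_iff_lt_exp hu.1).mp h1, h2⟩
    rw [hset, vol_Sr hQ hne (by simpa using Real.log_neg hu.1 hu.2)]
  rw [hmain, lintegral_mul_const _ (show Measurable fun u : ℝ => ENNReal.ofReal ((-Real.log u) ^ n) from (Real.measurable_log.neg.pow_const n).ennreal_ofReal),
    neglog_integral_eq_factorial, vol_diff_eq hQ hne]

end Measure


section Final

lemma pairing_add_right (x y v : Fin n → ℝ) : pairing x (y + v) = pairing x y + pairing x v := by
  simp only [pairing, Pi.add_apply, mul_add, Finset.sum_add_distrib]

lemma pairing_smul_right (c : ℝ) (x y : Fin n → ℝ) : pairing x (c • y) = c * pairing x y := by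
  simp only [pairing, Pi.smul_apply, smul_eq_mul, Finset.mul_sum]
  exact Finset.sum_congr rfl fun i _ => by ring

lemma pairing_basis (x : Fin n → ℝ) (i : Fin n) :
    pairing x (fun j => if i = j then 1 else 0) = x i := by
  simp only [pairing, mul_ite, mul_one, mul_zero]
  rw [Finset.sum_ite_eq]
  simp

lemma Sr_one_nonempty {Q : Set (Fin n → ℝ)} (hQ : Q ⊆ negOrth n) (hne : Q.Nonempty) :
    (Sr Q 1).Nonempty := by
  obtain ⟨y₀, hy₀⟩ := hne
  set T : ℝ := pairing (fun _ => 1) y₀ with hT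
  set ε : ℝ := (1 + |T|)⁻¹ with hε
  have habs : (0:ℝ) ≤ |T| := abs_nonneg T
  have hεpos : 0 < ε := by rw [hε]; positivity
  set x : Fin n → ℝ := ε • (fun _ : Fin n => (1:ℝ)) with hx
  have hxpos : x ∈ posOrth n := fun i => by
    simp only [hx, Pi.smul_apply, smul_eq_mul, mul_one]; exact hεpos
  refine ⟨x, hxpos, ?_⟩
  have h1 : pairing x y₀ ≤ supp Q x := le_supp hQ (posOrth_subset hxpos) hy₀
  have h2 : pairing x y₀ = ε * T := by rw [hx, pairing_smul_left]
  have h3 : -1 < ε * T := by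
    have hTlow : -|T| ≤ T := neg_abs_le T
    have h4 : ε * (1 + |T|) = 1 := by
      rw [hε]; exact inv_mul_cancel₀ (by positivity)
    nlinarith
  simp only [mem_setOf_eq]
  rw [h2] at h1
  linarith

lemma eqOn_of_ae_eq {s : Set (Fin n → ℝ)} (hs : IsOpen s) {f g : (Fin n → ℝ) → ℝ}
    (hf : ContinuousOn f s) (hg : ContinuousOn g s)
    (h : f =ᵐ[volume.restrict s] g) : EqOn f g s := by
  intro x hx
  by_contra hnefg
  set U := s ∩ (fun z => f z - g z) ⁻¹' ({0}ᶜ : Set ℝ) with hU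
  have hUopen : IsOpen U :=
    (hf.sub hg).isOpen_inter_preimage hs (isOpen_compl_iff.mpr isClosed_singleton)
  have hxU : x ∈ U := by
    refine ⟨hx, ?_⟩
    simp only [mem_preimage, mem_compl_iff, mem_singleton_iff]
    rw [sub_eq_zero]
    exact hnefg
  have hpos : 0 < volume U := hUopen.measure_pos volume ⟨x, hxU⟩
  have h0 : (volume.restrict s) {z | ¬ f z = g z} = 0 := ae_iff.mp h
  have hsub : U ⊆ {z | ¬ f z = g z} := by
    rintro z ⟨_, hz⟩
    simp only [mem_preimage, mem_compl_iff, mem_singleton_iff] at hz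
    simp only [mem_setOf_eq]
    intro hc; exact hz (by rw [hc, sub_self])
  have hle : (volume.restrict s) U = 0 := le_antisymm (h0 ▸ measure_mono hsub) (by simp)
  rw [Measure.restrict_apply' hs.measurableSet,
    inter_eq_self_of_subset_left inter_subset_left] at hle
  exact absurd hle hpos.ne'

lemma amgm_eq_case {a b w : ℝ} (ha : 0 < a) (hb : 0 < b) (hw1 : 0 < w) (hw2 : w < 1)
    (h : a ^ (1 - w) * b ^ w = (1 - w) * a + w * b) : a = b := by
  by_contra hne
  have hlog := strictConcaveOn_log_Ioi.2 (mem_Ioi.mpr ha) (mem_Ioi.mpr hb) hne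
    (by linarith : (0:ℝ) < 1 - w) hw1 (by ring)
  simp only [smul_eq_mul] at hlog
  have hexp := Real.exp_lt_exp.mpr hlog
  rw [Real.exp_add, Real.exp_log (by nlinarith : (0:ℝ) < (1-w)*a + w*b)] at hexp
  rw [mul_comm (1-w) (Real.log a), mul_comm w (Real.log b), Real.exp_mul, Real.exp_mul,
    Real.exp_log ha, Real.exp_log hb] at hexp
  rw [h] at hexp
  exact lt_irrefl _ hexp

lemma subset_of_supp_le {Q₀ Q₁ : Set (Fin n → ℝ)} (h₀ : Q₀ ⊆ negOrth n) (h₁ : Q₁ ⊆ negOrth n)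
    (h₁ne : Q₁.Nonempty) (h₁cl : IsClosed Q₁) (h₁c : Convex ℝ Q₁)
    (h₁compl : ∀ y ∈ Q₁, ∀ v ∈ nonposOrth n, y + v ∈ Q₁)
    (hle : ∀ x ∈ posOrth n, supp Q₀ x ≤ supp Q₁ x) : Q₀ ⊆ Q₁ := by
  intro y hy
  by_contra hyQ
  obtain ⟨f, u, hfa, hfy⟩ := geometric_hahn_banach_closed_point h₁c h₁cl hyQ
  set x : Fin n → ℝ := fun i => f (fun j => if i = j then 1 else 0) with hxdef
  have hrep : ∀ z : Fin n → ℝ, f z = pairing x z := by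
    intro z
    have hz : f z = f (∑ i, z i • fun j => if i = j then (1:ℝ) else 0) := by
      conv_lhs => rw [pi_eq_sum_univ z]
    rw [hz, map_sum, pairing]
    apply Finset.sum_congr rfl
    intro i _
    rw [ContinuousLinearMap.map_smul, smul_eq_mul, mul_comm]
  have hfa' : ∀ a ∈ Q₁, pairing x a < u := fun a ha => hrep a ▸ hfa a ha
  have hfy' : u < pairing x y := hrep y ▸ hfy
  obtain ⟨y₁, hy₁⟩ := h₁ne
  have hx : x ∈ nonnegOrth n := by
    intro i
    by_contra hneg
    push_neg at hneg
    set c : ℝ := x i with hc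
    set p : ℝ := pairing x y₁ with hp
    set s : ℝ := max 0 ((p - u)/c) with hs
    have hs0 : 0 ≤ s := le_max_left _ _
    have hsc : s * c ≤ p - u := by
      have hle1 : (p - u)/c ≤ s := le_max_right _ _
      calc s * c ≤ ((p - u)/c) * c := by nlinarith
        _ = p - u := div_mul_cancel₀ _ (ne_of_lt hneg)
    have hv : -(s • (fun j => if i = j then (1:ℝ) else 0)) ∈ nonposOrth n := by
      intro j
      simp only [Pi.neg_apply, Pi.smul_apply, smul_eq_mul, neg_nonpos]
      by_cases hij : i = j <;> simp [hij, hs0]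
    have hmem : y₁ + -(s • (fun j => if i = j then (1:ℝ) else 0)) ∈ Q₁ :=
      h₁compl y₁ hy₁ _ hv
    have hlt := hfa' _ hmem
    have hpair_neg : pairing x (-(s • fun j => if i = j then (1:ℝ) else 0)) = -(s * c) := by
      rw [← neg_smul, pairing_smul_right, pairing_basis, hc]; ring
    rw [pairing_add_right, hpair_neg, ← hp] at hlt
    linarith
  have hsupp1 : supp Q₁ x ≤ u := supp_le ⟨y₁, hy₁⟩ fun a ha => (hfa' a ha).le
  set T : ℝ := pairing (fun _ => 1) y with hT
  have hTabs : -|T| ≤ T := neg_abs_le T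
  set ε : ℝ := (pairing x y - u) / (2 * (|T| + 1)) with hε
  have habs : (0:ℝ) ≤ |T| := abs_nonneg T
  have hεpos : 0 < ε := by
    rw [hε]; apply div_pos (by linarith) (by positivity)
  set x' : Fin n → ℝ := x + ε • (fun _ : Fin n => (1:ℝ)) with hx'
  have hx'pos : x' ∈ posOrth n := by
    rw [hx']
    intro i
    simp only [Pi.add_apply, Pi.smul_apply, smul_eq_mul, mul_one]
    have := hx i; linarith
  have hone : (fun _ => (1:ℝ)) ∈ nonnegOrth n := fun _ => zero_le_one
  have hsupp2 : supp Q₁ x' ≤ u := by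
    have hz1 : (ε • (fun _ : Fin n => (1:ℝ))) ∈ nonnegOrth n := by
      intro i; simp only [Pi.smul_apply, smul_eq_mul, mul_one]; exact hεpos.le
    have hsub := supp_subadd h₁ ⟨y₁, hy₁⟩ hx hz1
    have hsm : supp Q₁ (ε • (fun _ : Fin n => (1:ℝ))) = ε * supp Q₁ (fun _ : Fin n => (1:ℝ)) :=
      supp_smul h₁ ⟨y₁, hy₁⟩ hone hεpos
    have hnp : supp Q₁ (fun _ : Fin n => (1:ℝ)) ≤ 0 := supp_nonpos h₁ ⟨y₁, hy₁⟩ hone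
    have h6 : ε * supp Q₁ (fun _ : Fin n => (1:ℝ)) ≤ 0 :=
      mul_nonpos_of_nonneg_of_nonpos hεpos.le hnp
    rw [hx']
    linarith [hsub, hsm, h6, hsupp1]
  have hpair : u < pairing x' y := by
    have hcomp : pairing x' y = pairing x y + ε * T := by
      rw [hx', pairing_add_left, pairing_smul_left, hT]
    have hεT : ε * (2 * (|T| + 1)) = pairing x y - u := by
      rw [hε]; field_simp
    nlinarith [mul_nonneg hεpos.le habs]
  have hfinal : pairing x' y ≤ supp Q₀ x' := le_supp h₀ (posOrth_subset hx'pos) hy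
  have := hle x' hx'pos
  linarith

end Final

end CopolarEq

open CopolarEq

theorem covol_copolar_equality_case {n : ℕ} (Q₀ Q₁ : Set (Fin n → ℝ))
    (h₀ : Q₀ ⊆ negOrth n) (h₁ : Q₁ ⊆ negOrth n)
    (h₀ne : Q₀.Nonempty) (h₁ne : Q₁.Nonempty)
    (h₀cl : IsClosed Q₀) (h₁cl : IsClosed Q₁)
    (h₀c : Convex ℝ Q₀) (h₁c : Convex ℝ Q₁)
    (h₀compl : ∀ y ∈ Q₀, ∀ v ∈ nonposOrth n, y + v ∈ Q₀)
    (h₁compl : ∀ y ∈ Q₁, ∀ v ∈ nonposOrth n, y + v ∈ Q₁)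
    (hfin₀ : volume (nonnegOrth n \ copolar Q₀) < ⊤)
    (hfin₁ : volume (nonnegOrth n \ copolar Q₁) < ⊤)
    (t : ℝ) (ht : t ∈ Set.Ioo (0:ℝ) 1)
    (heq : (volume (nonnegOrth n \ copolar (minkComb t Q₀ Q₁))).toReal =
      (volume (nonnegOrth n \ copolar Q₀)).toReal ^ (1 - t) *
      (volume (nonnegOrth n \ copolar Q₁)).toReal ^ t) :
    Q₀ = Q₁ := by
  classical
  obtain ⟨ht0, ht1⟩ := ht
  have h1t : (0:ℝ) < 1 - t := by linarith
  have hM : minkComb t Q₀ Q₁ ⊆ negOrth n := minkComb_subset h₀ h₁ ⟨ht0, ht1⟩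
  have hMne : (minkComb t Q₀ Q₁).Nonempty := minkComb_nonempty h₀ne h₁ne t
  set O := posOrth n with hO
  set μO := volume.restrict (posOrth n) with hμO
  set A := ∫⁻ x in posOrth n, ENNReal.ofReal (Real.exp (supp Q₀ x)) with hA
  set B := ∫⁻ x in posOrth n, ENNReal.ofReal (Real.exp (supp Q₁ x)) with hB
  set C := ∫⁻ x in posOrth n, ENNReal.ofReal (Real.exp (supp (minkComb t Q₀ Q₁) x)) with hC
  have hkey₀ := key_integral h₀ h₀ne
  have hkey₁ := key_integral h₁ h₁ne
  have hkeyt := key_integral hM hMne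
  have hfac0 : ((n.factorial : ℝ≥0∞)) ≠ 0 := Nat.cast_ne_zero.mpr n.factorial_ne_zero
  have hfacT : ((n.factorial : ℝ≥0∞)) ≠ ⊤ := ENNReal.natCast_ne_top _
  have hfacRpos : (0:ℝ) < (n.factorial : ℝ) := Nat.cast_pos.mpr n.factorial_pos
  have hA_fin : A ≠ ⊤ := by rw [hA, hkey₀]; exact ENNReal.mul_ne_top hfacT hfin₀.ne
  have hB_fin : B ≠ ⊤ := by rw [hB, hkey₁]; exact ENNReal.mul_ne_top hfacT hfin₁.ne
  have hvol₀pos : volume (nonnegOrth n \ copolar Q₀) ≠ 0 := by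
    rw [vol_diff_eq h₀ h₀ne]
    exact ((isOpen_Sr h₀ h₀ne 1).measure_pos volume (Sr_one_nonempty h₀ h₀ne)).ne'
  have hvol₁pos : volume (nonnegOrth n \ copolar Q₁) ≠ 0 := by
    rw [vol_diff_eq h₁ h₁ne]
    exact ((isOpen_Sr h₁ h₁ne 1).measure_pos volume (Sr_one_nonempty h₁ h₁ne)).ne'
  have hApos : A ≠ 0 := by rw [hA, hkey₀]; exact mul_ne_zero hfac0 hvol₀pos
  have hBpos : B ≠ 0 := by rw [hB, hkey₁]; exact mul_ne_zero hfac0 hvol₁pos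
  set A' := A.toReal with hA'
  set B' := B.toReal with hB'
  have hA'pos : 0 < A' := ENNReal.toReal_pos hApos hA_fin
  have hB'pos : 0 < B' := ENNReal.toReal_pos hBpos hB_fin
  -- continuity
  have hcs₀ : ContinuousOn (supp Q₀) O := continuousOn_supp h₀ h₀ne
  have hcs₁ : ContinuousOn (supp Q₁) O := continuousOn_supp h₁ h₁ne
  have hcst : ContinuousOn (supp (minkComb t Q₀ Q₁)) O := continuousOn_supp hM hMne
  have hce₀ : ContinuousOn (fun x => Real.exp (supp Q₀ x)) O :=
    Real.continuous_exp.comp_continuousOn hcs₀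
  have hce₁ : ContinuousOn (fun x => Real.exp (supp Q₁ x)) O :=
    Real.continuous_exp.comp_continuousOn hcs₁
  have hcet : ContinuousOn (fun x => Real.exp (supp (minkComb t Q₀ Q₁) x)) O :=
    Real.continuous_exp.comp_continuousOn hcst
  -- normalized densities
  set a : (Fin n → ℝ) → ℝ := fun x => Real.exp (supp Q₀ x) / A' with ha
  set b : (Fin n → ℝ) → ℝ := fun x => Real.exp (supp Q₁ x) / B' with hb
  have hapos : ∀ x, 0 < a x := fun x => div_pos (Real.exp_pos _) hA'pos
  have hbpos : ∀ x, 0 < b x := fun x => div_pos (Real.exp_pos _) hB'pos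
  have hconta : ContinuousOn a O := hce₀.div_const A'
  have hcontb : ContinuousOn b O := hce₁.div_const B'
  have hma : AEMeasurable (fun x => ENNReal.ofReal (a x)) μO :=
    (hconta.aemeasurable measurableSet_posOrth).ennreal_ofReal
  have hmb : AEMeasurable (fun x => ENNReal.ofReal (b x)) μO :=
    (hcontb.aemeasurable measurableSet_posOrth).ennreal_ofReal
  have hcontgeo : ContinuousOn (fun x => (a x) ^ (1 - t) * (b x) ^ t) O :=
    (hconta.rpow_const fun x _ => Or.inl (hapos x).ne').mul
      (hcontb.rpow_const fun x _ => Or.inl (hbpos x).ne')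
  have hmgeo : AEMeasurable (fun x => ENNReal.ofReal ((a x) ^ (1 - t) * (b x) ^ t)) μO :=
    (hcontgeo.aemeasurable measurableSet_posOrth).ennreal_ofReal
  have hmarith : AEMeasurable (fun x => ENNReal.ofReal ((1 - t) * a x + t * b x)) μO :=
    (((hconta.const_smul (1-t)).add (hcontb.const_smul t)).aemeasurable
      measurableSet_posOrth).ennreal_ofReal
  -- integrals of normalized densities
  have hInta : ∫⁻ x in posOrth n, ENNReal.ofReal (a x) = 1 := by
    have hptw : ∀ x, ENNReal.ofReal (a x)
        = ENNReal.ofReal (Real.exp (supp Q₀ x)) * ENNReal.ofReal (A'⁻¹) := by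
      intro x
      rw [← ENNReal.ofReal_mul (Real.exp_pos _).le, ha]
      simp [div_eq_mul_inv]
    simp_rw [hptw]
    rw [lintegral_mul_const' _ _ ENNReal.ofReal_ne_top, ← hA,
      ENNReal.ofReal_inv_of_pos hA'pos, hA', ENNReal.ofReal_toReal hA_fin]
    exact ENNReal.mul_inv_cancel hApos hA_fin
  have hIntb : ∫⁻ x in posOrth n, ENNReal.ofReal (b x) = 1 := by
    have hptw : ∀ x, ENNReal.ofReal (b x)
        = ENNReal.ofReal (Real.exp (supp Q₁ x)) * ENNReal.ofReal (B'⁻¹) := by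
      intro x
      rw [← ENNReal.ofReal_mul (Real.exp_pos _).le, hb]
      simp [div_eq_mul_inv]
    simp_rw [hptw]
    rw [lintegral_mul_const' _ _ ENNReal.ofReal_ne_top, ← hB,
      ENNReal.ofReal_inv_of_pos hB'pos, hB', ENNReal.ofReal_toReal hB_fin]
    exact ENNReal.mul_inv_cancel hBpos hB_fin
  -- pointwise AM-GM
  have hAMGM : ∀ x, (a x) ^ (1 - t) * (b x) ^ t ≤ (1 - t) * a x + t * b x := fun x =>
    Real.geom_mean_le_arith_mean2_weighted h1t.le ht0.le (hapos x).le (hbpos x).le (by ring)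
  -- exponential identity on the orthant
  have hexp_comb : ∀ x ∈ posOrth n, Real.exp (supp (minkComb t Q₀ Q₁) x)
      = (Real.exp (supp Q₀ x)) ^ (1 - t) * (Real.exp (supp Q₁ x)) ^ t := by
    intro x hx
    rw [supp_minkComb h₀ h₁ h₀ne h₁ne ⟨ht0, ht1⟩ (posOrth_subset hx), Real.exp_add,
      mul_comm (1 - t) _, mul_comm t _, Real.exp_mul, Real.exp_mul]
  -- C is finite
  have hC_fin : C ≠ ⊤ := by
    have hle : C ≤ ENNReal.ofReal (1 - t) * A + ENNReal.ofReal t * B := by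
      rw [hC, hA, hB]
      have hmono : ∫⁻ x in posOrth n, ENNReal.ofReal (Real.exp (supp (minkComb t Q₀ Q₁) x))
          ≤ ∫⁻ x in posOrth n,
            (ENNReal.ofReal (1 - t) * ENNReal.ofReal (Real.exp (supp Q₀ x))
              + ENNReal.ofReal t * ENNReal.ofReal (Real.exp (supp Q₁ x))) := by
        apply lintegral_mono_ae
        rw [ae_restrict_iff' measurableSet_posOrth]
        filter_upwards with x hx
        rw [hexp_comb x hx, ← ENNReal.ofReal_mul h1t.le, ← ENNReal.ofReal_mul ht0.le,
          ← ENNReal.ofReal_add (by positivity) (by positivity)]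
        apply ENNReal.ofReal_le_ofReal
        exact Real.geom_mean_le_arith_mean2_weighted h1t.le ht0.le (Real.exp_pos _).le
          (Real.exp_pos _).le (by ring)
      refine hmono.trans ?_
      rw [lintegral_add_left' (((hce₀.aemeasurable measurableSet_posOrth).ennreal_ofReal).const_mul _),
        lintegral_const_mul' _ _ ENNReal.ofReal_ne_top,
        lintegral_const_mul' _ _ ENNReal.ofReal_ne_top]
    exact ne_top_of_le_ne_top (by
      exact ENNReal.add_ne_top.mpr ⟨ENNReal.mul_ne_top ENNReal.ofReal_ne_top hA_fin,
        ENNReal.mul_ne_top ENNReal.ofReal_ne_top hB_fin⟩) hle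
  -- the equality hypothesis in integral form
  set P : ℝ := A' ^ (1 - t) * B' ^ t with hP
  have hPpos : 0 < P := by positivity
  have hCt : C.toReal = P := by
    have e0 : A' = (n.factorial : ℝ) * (volume (nonnegOrth n \ copolar Q₀)).toReal := by
      rw [hA', hA, hkey₀, ENNReal.toReal_mul, ENNReal.toReal_natCast]
    have e1 : B' = (n.factorial : ℝ) * (volume (nonnegOrth n \ copolar Q₁)).toReal := by
      rw [hB', hB, hkey₁, ENNReal.toReal_mul, ENNReal.toReal_natCast]
    have e2 : C.toReal = (n.factorial : ℝ)
        * (volume (nonnegOrth n \ copolar (minkComb t Q₀ Q₁))).toReal := by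
      rw [hC, hkeyt, ENNReal.toReal_mul, ENNReal.toReal_natCast]
    rw [hP, e0, e1, e2, heq,
      Real.mul_rpow hfacRpos.le ENNReal.toReal_nonneg,
      Real.mul_rpow hfacRpos.le ENNReal.toReal_nonneg]
    rw [show ((n.factorial:ℝ) ^ (1-t) * (volume (nonnegOrth n \ copolar Q₀)).toReal ^ (1-t))
        * ((n.factorial:ℝ) ^ t * (volume (nonnegOrth n \ copolar Q₁)).toReal ^ t)
        = ((n.factorial:ℝ) ^ (1-t) * (n.factorial:ℝ) ^ t)
          * ((volume (nonnegOrth n \ copolar Q₀)).toReal ^ (1-t)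
            * (volume (nonnegOrth n \ copolar Q₁)).toReal ^ t) from by ring,
      ← Real.rpow_add hfacRpos]
    norm_num
  -- integral of the geometric mean is 1
  have hIntgeo : ∫⁻ x in posOrth n, ENNReal.ofReal ((a x) ^ (1 - t) * (b x) ^ t) = 1 := by
    have hgeo_eq : ∀ x ∈ posOrth n, ENNReal.ofReal ((a x) ^ (1 - t) * (b x) ^ t)
        = ENNReal.ofReal (Real.exp (supp (minkComb t Q₀ Q₁) x)) * ENNReal.ofReal (P⁻¹) := by
      intro x hx
      rw [← ENNReal.ofReal_mul (by positivity)]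
      congr 1
      rw [ha, hb, Real.div_rpow (Real.exp_pos _).le hA'pos.le,
        Real.div_rpow (Real.exp_pos _).le hB'pos.le, hexp_comb x hx, hP]
      field_simp
    rw [setLIntegral_congr_fun measurableSet_posOrth
      (fun x hx => hgeo_eq x hx),
      lintegral_mul_const' _ _ ENNReal.ofReal_ne_top, ← hC,
      ← ENNReal.ofReal_toReal hC_fin, hCt, ← ENNReal.ofReal_mul hPpos.le,
      mul_inv_cancel₀ hPpos.ne', ENNReal.ofReal_one]
  -- integral of the arithmetic mean is 1
  have hIntarith : ∫⁻ x in posOrth n, ENNReal.ofReal ((1 - t) * a x + t * b x) = 1 := by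
    have hptw : ∀ x, ENNReal.ofReal ((1 - t) * a x + t * b x)
        = ENNReal.ofReal (1 - t) * ENNReal.ofReal (a x)
          + ENNReal.ofReal t * ENNReal.ofReal (b x) := by
      intro x
      rw [ENNReal.ofReal_add (by positivity) (by positivity),
        ENNReal.ofReal_mul h1t.le, ENNReal.ofReal_mul ht0.le]
    simp_rw [hptw]
    rw [lintegral_add_left' (hma.const_mul _), lintegral_const_mul'' _ hma,
      lintegral_const_mul'' _ hmb, hInta, hIntb, mul_one, mul_one,
      ← ENNReal.ofReal_add h1t.le ht0.le]
    norm_num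
  -- difference integrates to zero
  have hD : ∫⁻ x in posOrth n, (ENNReal.ofReal ((1 - t) * a x + t * b x)
      - ENNReal.ofReal ((a x) ^ (1 - t) * (b x) ^ t)) = 0 := by
    rw [lintegral_sub' hmgeo (by rw [hIntgeo]; exact ENNReal.one_ne_top)
      (Filter.Eventually.of_forall fun x => ENNReal.ofReal_le_ofReal (hAMGM x)),
      hIntarith, hIntgeo, tsub_self]
  have haezero := (lintegral_eq_zero_iff' (hmarith.sub hmgeo)).mp hD
  -- a = b almost everywhere
  have haeq : ∀ᵐ x ∂μO, a x = b x := by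
    filter_upwards [haezero] with x hx
    simp only [Pi.zero_apply] at hx
    have h7 : ENNReal.ofReal ((1 - t) * a x + t * b x)
        ≤ ENNReal.ofReal ((a x) ^ (1 - t) * (b x) ^ t) := tsub_eq_zero_iff_le.mp hx
    have h8 : (1 - t) * a x + t * b x ≤ (a x) ^ (1 - t) * (b x) ^ t :=
      (ENNReal.ofReal_le_ofReal_iff (by positivity)).mp h7
    exact amgm_eq_case (hapos x) (hbpos x) ht0 ht1 (le_antisymm (hAMGM x) h8)
  -- supp Q₀ - supp Q₁ is a.e. constant
  have haediff : ∀ᵐ x ∂μO, supp Q₀ x - supp Q₁ x = Real.log (A' / B') := by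
    filter_upwards [haeq] with x hx
    rw [ha, hb] at hx
    have h9 : Real.exp (supp Q₀ x - supp Q₁ x) = A' / B' := by
      rw [Real.exp_sub]
      rw [div_eq_div_iff (Real.exp_pos _).ne' hB'pos.ne']
      simp only at hx
      field_simp at hx
      linarith
    rw [← h9, Real.log_exp]
  have hEqOn : EqOn (fun x => supp Q₀ x - supp Q₁ x) (fun _ => Real.log (A' / B')) (posOrth n) :=
    eqOn_of_ae_eq isOpen_posOrth (hcs₀.sub hcs₁) continuousOn_const haediff
  -- the constant is zero
  have honep : (fun _ : Fin n => (1:ℝ)) ∈ posOrth n := one_mem_posOrth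
  have h2one : ((2:ℝ) • (fun _ : Fin n => (1:ℝ))) ∈ posOrth n := by
    intro i
    simp only [Pi.smul_apply, smul_eq_mul, mul_one]
    norm_num
  have e1 := hEqOn honep
  have e2 := hEqOn h2one
  simp only at e1 e2
  rw [supp_smul h₀ h₀ne (posOrth_subset honep) two_pos,
    supp_smul h₁ h₁ne (posOrth_subset honep) two_pos] at e2
  have hc0 : Real.log (A' / B') = 0 := by linarith
  have hsupp_eq : ∀ x ∈ posOrth n, supp Q₀ x = supp Q₁ x := by
    intro x hx
    have := hEqOn hx
    simp only at this
    rw [hc0] at this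
    linarith
  apply Set.Subset.antisymm
  · exact subset_of_supp_le h₀ h₁ h₁ne h₁cl h₁c h₁compl fun x hx => (hsupp_eq x hx).le
  · exact subset_of_supp_le h₁ h₀ h₀ne h₀cl h₀c h₀compl fun x hx => (hsupp_eq x hx).ge
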